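/- Let q ≥ 2, k ≥ 3, and c > 0 with c·k(k−1) < (q^{k−1}−1)^2. Define f(ρ) = −∑_{i,j=1}^q ρ_{ij} ln ρ_{ij} + c ln(1 − 2q^{1−k} + ∑_{i,j} ρ_{ij}^k) on q×q matrices with positive entries summing to 1 whose row sums and column sums all equal 1/q. Then ρ̄ (all entries 1/q²) is a strict local maximum of f restricted to this affine set; more precisely, the Hessian quadratic form of f at ρ̄ restricted to directions ε with all row and column sums zero equals −q²(1 − ck(k−1)/(q^{k−1}−1)^2)·‖ε‖₂², which is negative definite. -/

import Mathlib

open Filter Topology Finset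


theorem stmt5_eq (q k : ℕ) (hq : 2 ≤ q) (hk : 3 ≤ k) (c : ℝ)
    (ε : Fin q → Fin q → ℝ) (hrow : ∀ i, ∑ j, ε i j = 0) :
    deriv (deriv (fun t : ℝ =>
      (-∑ i : Fin q, ∑ j : Fin q,
          (((q : ℝ) ^ 2)⁻¹ + t * ε i j) * Real.log (((q : ℝ) ^ 2)⁻¹ + t * ε i j))
        + c * Real.log (1 - 2 * (q : ℝ) ^ ((1 : ℤ) - k)
            + ∑ i : Fin q, ∑ j : Fin q, (((q : ℝ) ^ 2)⁻¹ + t * ε i j) ^ k))) 0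
      = -(q : ℝ) ^ 2 * (1 - c * ↑k * (↑k - 1) / ((q : ℝ) ^ (k - 1) - 1) ^ 2) *
          (∑ i : Fin q, ∑ j : Fin q, (ε i j) ^ 2) := by
  have hq1 : (1:ℝ) < (q:ℝ) := by exact_mod_cast (by omega : 1 < q)
  have hq0 : (0:ℝ) < (q:ℝ) := lt_trans one_pos hq1
  set a : ℝ := ((q:ℝ)^2)⁻¹ with ha_def
  have ha : 0 < a := by positivity
  set P : ℝ := (q:ℝ)^(k-1) with hP_def
  have hP1 : 1 < P := one_lt_pow₀ hq1 (by omega)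
  have hP0 : 0 < P := lt_trans one_pos hP1
  have hz : (q:ℝ) ^ ((1:ℤ) - k) = P⁻¹ := by
    have h1 : ((1:ℤ) - k) = -((k - 1 : ℕ) : ℤ) := by
      push_cast [Nat.cast_sub (show 1 ≤ k by omega)]; ring
    rw [h1, zpow_neg, zpow_natCast]
  -- the affine entries
  have hlin : ∀ (t : ℝ) (i j : Fin q), HasDerivAt (fun s : ℝ => a + s * ε i j) (ε i j) t := by
    intro t i j
    simpa using ((hasDerivAt_id t).mul_const (ε i j)).const_add a
  -- define G, G1, F
  set G : ℝ → ℝ := fun t => 1 - 2 * (q : ℝ) ^ ((1 : ℤ) - k)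
      + ∑ i : Fin q, ∑ j : Fin q, (a + t * ε i j) ^ k with hG_def
  set G1 : ℝ → ℝ := fun t => ∑ i : Fin q, ∑ j : Fin q,
      (k:ℝ) * (a + t * ε i j) ^ (k-1) * ε i j with hG1_def
  set F : ℝ → ℝ := fun t =>
      (-∑ i : Fin q, ∑ j : Fin q, (Real.log (a + t * ε i j) + 1) * ε i j)
        + c * (G1 t / G t) with hF_def
  -- value of G at 0
  have hsum0 : ∑ i : Fin q, ∑ j : Fin q, (a + 0 * ε i j) ^ k = (P⁻¹)^2 := by
    have key : ((q:ℝ)^2)^k = (q:ℝ)^2 * P^2 := by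
      rw [hP_def, ← pow_mul, ← pow_mul, ← pow_add]
      congr 1
      omega
    simp only [zero_mul, add_zero, Finset.sum_const, Finset.card_univ, Fintype.card_fin,
      nsmul_eq_mul]
    rw [ha_def, inv_pow, key]
    have hQ2 : ((q:ℝ)^2) ≠ 0 := by positivity
    field_simp
  have hG0 : G 0 = (1 - P⁻¹)^2 := by
    rw [hG_def]
    simp only [hz, hsum0]
    ring
  have hG0pos : 0 < G 0 := by
    rw [hG0]
    have : 0 < 1 - P⁻¹ := by
      have : P⁻¹ < 1 := inv_lt_one_of_one_lt₀ hP1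
      linarith
    positivity
  -- G1 0 = 0
  have hG10 : G1 0 = 0 := by
    rw [hG1_def]
    simp only [zero_mul, add_zero]
    have : ∀ i : Fin q, ∑ j : Fin q, (k:ℝ) * a ^ (k-1) * ε i j = 0 := by
      intro i
      rw [← Finset.mul_sum, hrow i, mul_zero]
    simp only [this, Finset.sum_const_zero]
  -- HasDerivAt f (F t) t on the good set
  have hfd : ∀ t : ℝ, (∀ i j, 0 < a + t * ε i j) → 0 < G t →
      HasDerivAt (fun t : ℝ =>
        (-∑ i : Fin q, ∑ j : Fin q, (a + t * ε i j) * Real.log (a + t * ε i j))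
          + c * Real.log (G t)) (F t) t := by
    intro t ht hGt
    have hE : HasDerivAt (fun s : ℝ => ∑ i : Fin q, ∑ j : Fin q,
        (a + s * ε i j) * Real.log (a + s * ε i j))
        (∑ i : Fin q, ∑ j : Fin q, (Real.log (a + t * ε i j) + 1) * ε i j) t := by
      refine HasDerivAt.fun_sum fun i _ => HasDerivAt.fun_sum fun j _ => ?_
      exact (Real.hasDerivAt_mul_log (ht i j).ne').comp t (hlin t i j)
    have hGd : HasDerivAt G (G1 t) t := by
      refine HasDerivAt.const_add _ (HasDerivAt.fun_sum fun i _ => HasDerivAt.fun_sum fun j _ => ?_)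
      simpa using ((hlin t i j).fun_pow k)
    have hL : HasDerivAt (fun s => Real.log (G s)) (G1 t / G t) t := hGd.log hGt.ne'
    exact hE.neg.add (hL.const_mul c)
  -- eventual positivity
  have hev : ∀ᶠ t in 𝓝 (0:ℝ), (∀ i j, 0 < a + t * ε i j) ∧ 0 < G t := by
    have h1 : ∀ᶠ t in 𝓝 (0:ℝ), ∀ i : Fin q, ∀ j : Fin q, 0 < a + t * ε i j := by
      rw [Filter.eventually_all]
      intro i
      rw [Filter.eventually_all]
      intro j
      have hc : ContinuousAt (fun t : ℝ => a + t * ε i j) 0 := by fun_prop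
      have h0 : ∀ᶠ x in 𝓝 ((fun t : ℝ => a + t * ε i j) 0), 0 < x := by
        apply eventually_gt_nhds
        simpa using ha
      exact hc.eventually h0
    have h2 : ∀ᶠ t in 𝓝 (0:ℝ), 0 < G t := by
      have hc : Continuous G := by
        rw [hG_def]
        refine continuous_const.add (continuous_finset_sum _ fun i _ => continuous_finset_sum _ fun j _ => ?_)
        fun_prop
      exact (hc.continuousAt).eventually (eventually_gt_nhds hG0pos)
    exact h1.and h2
  -- deriv f = F near 0
  have hdf : deriv (fun t : ℝ =>
      (-∑ i : Fin q, ∑ j : Fin q, (a + t * ε i j) * Real.log (a + t * ε i j))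
        + c * Real.log (G t)) =ᶠ[𝓝 (0:ℝ)] F :=
    hev.mono fun t ht => (hfd t ht.1 ht.2).deriv
  rw [show (fun t : ℝ =>
      (-∑ i : Fin q, ∑ j : Fin q,
          (a + t * ε i j) * Real.log (a + t * ε i j))
        + c * Real.log (1 - 2 * (q : ℝ) ^ ((1 : ℤ) - k)
            + ∑ i : Fin q, ∑ j : Fin q, (a + t * ε i j) ^ k)) = (fun t : ℝ =>
      (-∑ i : Fin q, ∑ j : Fin q, (a + t * ε i j) * Real.log (a + t * ε i j))
        + c * Real.log (G t)) from rfl, hdf.deriv_eq]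
  -- now compute deriv F 0
  have hc0 : ∀ i j, (0:ℝ) < a + 0 * ε i j := by intro i j; simpa using ha
  -- derivative pieces at 0
  have hE2 : HasDerivAt (fun s : ℝ => ∑ i : Fin q, ∑ j : Fin q,
      (Real.log (a + s * ε i j) + 1) * ε i j)
      (∑ i : Fin q, ∑ j : Fin q, ε i j / a * ε i j) 0 := by
    refine HasDerivAt.fun_sum fun i _ => HasDerivAt.fun_sum fun j _ => ?_
    have h2 := (((hlin 0 i j).log (hc0 i j).ne')).add_const 1
    have h3 := h2.mul_const (ε i j)
    simpa using h3
  have hG1d : HasDerivAt G1 (∑ i : Fin q, ∑ j : Fin q,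
      (k:ℝ) * ((k-1:ℕ):ℝ) * a ^ (k-2) * (ε i j)^2) 0 := by
    refine HasDerivAt.fun_sum fun i _ => HasDerivAt.fun_sum fun j _ => ?_
    have h2 := (((hlin 0 i j).fun_pow (k-1)).const_mul (k:ℝ)).mul_const (ε i j)
    convert h2 using 1
    · rfl
    simp only [zero_mul, add_zero, Nat.sub_sub]
    ring
  have hGd0 : HasDerivAt G 0 0 := by
    have h : HasDerivAt G
        (∑ i : Fin q, ∑ j : Fin q, (k:ℝ) * (a + 0 * ε i j) ^ (k-1) * ε i j) 0 := by
      refine HasDerivAt.const_add _ (HasDerivAt.fun_sum fun i _ => HasDerivAt.fun_sum fun j _ => ?_)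
      simpa using ((hlin 0 i j).fun_pow k)
    have hval : (∑ i : Fin q, ∑ j : Fin q, (k:ℝ) * (a + 0 * ε i j) ^ (k-1) * ε i j) = 0 := by
      simp only [zero_mul, add_zero]
      have : ∀ i : Fin q, ∑ j : Fin q, (k:ℝ) * a ^ (k-1) * ε i j = 0 := by
        intro i
        rw [← Finset.mul_sum, hrow i, mul_zero]
      simp only [this, Finset.sum_const_zero]
    rw [hval] at h
    exact h
  have hdiv : HasDerivAt (fun t => G1 t / G t)
      (((∑ i : Fin q, ∑ j : Fin q, (k:ℝ) * ((k-1:ℕ):ℝ) * a ^ (k-2) * (ε i j)^2) * G 0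
        - G1 0 * 0) / (G 0)^2) 0 := hG1d.div hGd0 hG0pos.ne'
  have hFd : HasDerivAt F
      ((-∑ i : Fin q, ∑ j : Fin q, ε i j / a * ε i j)
        + c * (((∑ i : Fin q, ∑ j : Fin q, (k:ℝ) * ((k-1:ℕ):ℝ) * a ^ (k-2) * (ε i j)^2) * G 0
          - G1 0 * 0) / (G 0)^2)) 0 := by
    rw [hF_def]
    exact hE2.neg.add (hdiv.const_mul c)
  rw [hFd.deriv]
  -- final algebra
  set S : ℝ := ∑ i : Fin q, ∑ j : Fin q, (ε i j)^2 with hS_def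
  have hsum1 : (∑ i : Fin q, ∑ j : Fin q, ε i j / a * ε i j) = S / a := by
    rw [hS_def, Finset.sum_div]
    refine Finset.sum_congr rfl fun i _ => ?_
    rw [Finset.sum_div]
    refine Finset.sum_congr rfl fun j _ => ?_
    ring
  have hsum2 : (∑ i : Fin q, ∑ j : Fin q, (k:ℝ) * ((k-1:ℕ):ℝ) * a ^ (k-2) * (ε i j)^2)
      = (k:ℝ) * ((k:ℝ) - 1) * a ^ (k-2) * S := by
    rw [hS_def]
    simp only [← Finset.mul_sum]
    congr 2
    push_cast [Nat.cast_sub (show 1 ≤ k by omega)]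
    ring
  rw [hsum1, hsum2, hG10, hG0]
  -- key power identity
  have ha2 : a ^ (k-2) * P^2 = (q:ℝ)^2 := by
    have key : ((q:ℝ)^2)^(k-2) * (q:ℝ)^2 = P^2 := by
      rw [hP_def, ← pow_mul, ← pow_mul, ← pow_add]
      congr 1
      omega
    rw [ha_def, inv_pow, ← key]
    field_simp
  have hP1' : P - 1 ≠ 0 := by linarith
  have h1P : 1 - P⁻¹ = (P - 1) / P := by field_simp
  rw [h1P]
  have hane : a ≠ 0 := ha.ne'
  have ha2' : a ^ (k-2) = (q:ℝ)^2 / P^2 := by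
    rw [← ha2]
    field_simp
  rw [ha2', ha_def]
  field_simp
  ring


/-- The Hessian quadratic form of `f = H + E` at the uniform overlap matrix `ρ̄`,
in a direction `ε` with vanishing row and column sums, equals
`-q²(1 - ck(k-1)/(q^{k-1}-1)²)‖ε‖₂²`, which is negative for `ε ≠ 0`:
so `ρ̄` is a strict local maximum of `f` on the doubly balanced affine set. -/
theorem stmt_5 (q k : ℕ) (hq : 2 ≤ q) (hk : 3 ≤ k) (c : ℝ) (hc : 0 < c)
    (hcond : c * k * (k - 1) < ((q : ℝ) ^ (k - 1) - 1) ^ 2)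
    (ε : Fin q → Fin q → ℝ)
    (hrow : ∀ i, ∑ j, ε i j = 0) (hcol : ∀ j, ∑ i, ε i j = 0) :
    let f : ℝ → ℝ := fun t =>
      (-∑ i : Fin q, ∑ j : Fin q,
          (((q : ℝ) ^ 2)⁻¹ + t * ε i j) * Real.log (((q : ℝ) ^ 2)⁻¹ + t * ε i j))
        + c * Real.log (1 - 2 * (q : ℝ) ^ ((1 : ℤ) - k)
            + ∑ i : Fin q, ∑ j : Fin q, (((q : ℝ) ^ 2)⁻¹ + t * ε i j) ^ k)
    deriv (deriv f) 0
        = -(q : ℝ) ^ 2 * (1 - c * k * (k - 1) / ((q : ℝ) ^ (k - 1) - 1) ^ 2) *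
            (∑ i : Fin q, ∑ j : Fin q, (ε i j) ^ 2)
      ∧ (ε ≠ 0 → deriv (deriv f) 0 < 0) := by
  intro f
  have heq := stmt5_eq q k hq hk c ε hrow
  refine ⟨heq, fun hne => ?_⟩
  have hgoal : deriv (deriv f) 0
      = -(q : ℝ) ^ 2 * (1 - c * k * (k - 1) / ((q : ℝ) ^ (k - 1) - 1) ^ 2) *
          (∑ i : Fin q, ∑ j : Fin q, (ε i j) ^ 2) := heq
  rw [hgoal]
  have hq1 : (1:ℝ) < (q:ℝ) := by exact_mod_cast (by omega : 1 < q)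
  have hP1 : 1 < (q:ℝ) ^ (k-1) := one_lt_pow₀ hq1 (by omega)
  have hP2 : 0 < ((q:ℝ) ^ (k-1) - 1)^2 := by
    have : (0:ℝ) < (q:ℝ)^(k-1) - 1 := by linarith
    positivity
  have hX : c * k * (k - 1) / ((q : ℝ) ^ (k - 1) - 1) ^ 2 < 1 :=
    (div_lt_one hP2).mpr hcond
  have hS : 0 < ∑ i : Fin q, ∑ j : Fin q, (ε i j)^2 := by
    obtain ⟨i, hi⟩ := Function.ne_iff.mp hne
    obtain ⟨j, hj⟩ := Function.ne_iff.mp hi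
    refine Finset.sum_pos' (fun i _ => Finset.sum_nonneg fun j _ => sq_nonneg _) ⟨i, Finset.mem_univ i, ?_⟩
    exact Finset.sum_pos' (fun j _ => sq_nonneg _) ⟨j, Finset.mem_univ j, by simpa [sq_abs] using pow_pos (abs_pos.mpr hj) 2⟩
  have hq0 : (0:ℝ) < (q:ℝ)^2 := by positivity
  have hpos : 0 < (q : ℝ) ^ 2 * (1 - c * k * (k - 1) / ((q : ℝ) ^ (k - 1) - 1) ^ 2) *
      (∑ i : Fin q, ∑ j : Fin q, (ε i j)^2) :=
    mul_pos (mul_pos hq0 (by linarith)) hS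
  nlinarith [hpos]
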